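/- Let s = (s_1,…,s_n) be a sequence of positive integers and s* = (s_1,…,s_n,1). For every nonnegative integer t, the number of lattice points λ ∈ ℤ^n satisfying 0 ≤ λ_1/s_1 ≤ ⋯ ≤ λ_n/s_n ≤ t equals Σ_{i=0}^{n} c_i · C(t+n−i, n), where c_i = #{ r ∈ Ψ_n : des_{s*}(r_1,…,r_n,0) = i } and C(·,·) is the binomial coefficient. (Equivalently, the δ-vector of the s-lecture hall polytope is given by counting s*-descents of sequences in Ψ_n × {0}.) -/

import Mathlib

/-- The generator vectors of the s-lecture hall parallelepiped: `lhVec s j` has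
`i`-th coordinate `s i` for `i ≥ j` and `0` for `i < j`. -/
def lhVec {n : ℕ} (s : Fin n → ℕ) (j : Fin n) : Fin n → ℝ :=
  fun i => if j ≤ i then (s i : ℝ) else 0

/-- The s-lecture hall parallelepiped: the half-open parallelepiped generated by
the vectors `lhVec s j`. -/
def lhPar {n : ℕ} (s : Fin n → ℕ) : Set (Fin n → ℝ) :=
  {x | ∃ c : Fin n → ℝ, (∀ j, 0 ≤ c j ∧ c j < 1) ∧ x = ∑ j, c j • lhVec s j}

/-- `lhEll S i` is the number of lattice points of `S ⊆ ℝ^N` whose last coordinate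
equals `i`. -/
noncomputable def lhEll {N : ℕ} (S : Set (Fin N → ℝ)) (i : ℕ) : ℕ :=
  Set.ncard {x : Fin N → ℤ | (fun k => (x k : ℝ)) ∈ S ∧
    ∀ j : Fin N, (j : ℕ) = N - 1 → x j = (i : ℤ)}

/-- The number of s-descents of `r`: indices `i` with `r i / s i > r (i+1) / s (i+1)`. -/
noncomputable def sDes {N : ℕ} (s : Fin N → ℕ) (r : Fin N → ℤ) : ℕ :=
  Set.ncard {i : Fin N | ∃ h : (i : ℕ) + 1 < N,
    (r i : ℚ) / (s i : ℚ) > (r ⟨(i : ℕ) + 1, h⟩ : ℚ) / (s ⟨(i : ℕ) + 1, h⟩ : ℚ)}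

/-- The number of s-ascents of `r`: indices `i` with `r i / s i < r (i+1) / s (i+1)`. -/
noncomputable def sAsc {N : ℕ} (s : Fin N → ℕ) (r : Fin N → ℤ) : ℕ :=
  Set.ncard {i : Fin N | ∃ h : (i : ℕ) + 1 < N,
    (r i : ℚ) / (s i : ℚ) < (r ⟨(i : ℕ) + 1, h⟩ : ℚ) / (s ⟨(i : ℕ) + 1, h⟩ : ℚ)}

/-- The number of (regular) descents of `r`: indices `i` with `r i > r (i+1)`. -/
noncomputable def rDes {N : ℕ} (r : Fin N → ℤ) : ℕ :=
  Set.ncard {i : Fin N | ∃ h : (i : ℕ) + 1 < N, r ⟨(i : ℕ) + 1, h⟩ < r i}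

/-- The number of (regular) ascents of `r`: indices `i` with `r i < r (i+1)`. -/
noncomputable def rAsc {N : ℕ} (r : Fin N → ℤ) : ℕ :=
  Set.ncard {i : Fin N | ∃ h : (i : ℕ) + 1 < N, r i < r ⟨(i : ℕ) + 1, h⟩}

/-- The number of s-descents of `r` at positions strictly before position `i`. -/
noncomputable def sDesLt {N : ℕ} (s : Fin N → ℕ) (r : Fin N → ℤ) (i : Fin N) : ℕ :=
  Set.ncard {j : Fin N | (j : ℕ) < (i : ℕ) ∧ ∃ h : (j : ℕ) + 1 < N,
    (r j : ℚ) / (s j : ℚ) > (r ⟨(j : ℕ) + 1, h⟩ : ℚ) / (s ⟨(j : ℕ) + 1, h⟩ : ℚ)}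

/-- `lhPsi s` is the set `Ψ_n = {0,…,s 0 − 1} × ⋯ × {0,…,s (n-1) − 1}`. -/
def lhPsi {n : ℕ} (s : Fin n → ℕ) : Set (Fin n → ℤ) :=
  {r | ∀ i, 0 ≤ r i ∧ r i < (s i : ℤ)}

/-- `inDilate s t lam` says that the lattice point `lam` satisfies
`0 ≤ lam 0 / s 0 ≤ lam 1 / s 1 ≤ ⋯ ≤ lam (n-1) / s (n-1) ≤ t`,
i.e. lies in the `t`-th dilate of the s-lecture hall polytope. -/
def inDilate {n : ℕ} (s : Fin n → ℕ) (t : ℕ) (lam : Fin n → ℤ) : Prop :=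
  (∀ i : Fin n, (i : ℕ) = 0 → 0 ≤ (lam i : ℚ) / (s i : ℚ)) ∧
  (∀ i : Fin n, ∀ h : (i : ℕ) + 1 < n,
    (lam i : ℚ) / (s i : ℚ) ≤ (lam ⟨(i : ℕ) + 1, h⟩ : ℚ) / (s ⟨(i : ℕ) + 1, h⟩ : ℚ)) ∧
  (∀ i : Fin n, (i : ℕ) = n - 1 → (lam i : ℚ) / (s i : ℚ) ≤ (t : ℚ))

open Finset


-- gap lemma for strictMono into Fin
lemma fin_gap {n N : ℕ} {f : Fin n → Fin N} (hf : StrictMono f) :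
    ∀ (d : ℕ) (i j : Fin n), (j : ℕ) = (i : ℕ) + d → (f i : ℕ) + d ≤ (f j : ℕ) := by
  intro d
  induction d with
  | zero => intro i j h; have : i = j := Fin.ext h.symm; simp [this]
  | succ d ih =>
    intro i j h
    have hd : (i : ℕ) + d < n := by omega
    have h1 := ih i ⟨(i : ℕ) + d, hd⟩ rfl
    have h2 : f ⟨(i : ℕ) + d, hd⟩ < f j := hf (by simp [Fin.lt_def, h])
    omega

lemma card_strictMono (n N : ℕ) :
    Nat.card {f : Fin n → Fin N // StrictMono f} = N.choose n := by
  classical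
  have e : {f : Fin n → Fin N // StrictMono f} ≃ {A : Finset (Fin N) // A.card = n} := by
    refine Equiv.ofBijective (fun f => ⟨Finset.univ.image f.1, by
      rw [Finset.card_image_of_injective _ f.2.injective, Finset.card_univ, Fintype.card_fin]⟩) ?_
    constructor
    · rintro ⟨f, hf⟩ ⟨g, hg⟩ h
      simp only [Subtype.mk.injEq] at h ⊢
      have : (OrderEmbedding.ofStrictMono f hf) = (OrderEmbedding.ofStrictMono g hg) := by
        apply OrderEmbedding.range_inj.mp
        simp only [OrderEmbedding.coe_ofStrictMono]
        rw [← Set.image_univ, ← Set.image_univ, ← Finset.coe_univ, ← Finset.coe_image,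
          ← Finset.coe_image, h]
      funext i
      exact congrArg (fun (e : Fin n ↪o Fin N) => e i) this
    · rintro ⟨A, hA⟩
      refine ⟨⟨A.orderEmbOfFin hA, (A.orderEmbOfFin hA).strictMono⟩, ?_⟩
      ext x
      simp only [Finset.mem_image, Finset.mem_univ, true_and]
      constructor
      · rintro ⟨i, rfl⟩; exact A.orderEmbOfFin_mem hA i
      · intro hx
        have := A.range_orderEmbOfFin hA
        have : x ∈ Set.range (A.orderEmbOfFin hA) := by rw [this]; exact hx
        obtain ⟨i, hi⟩ := this; exact ⟨i, hi⟩
  rw [Nat.card_congr e, Nat.card_eq_fintype_card, Fintype.card_subtype]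
  rw [← Finset.powerset_univ, ← Finset.powersetCard_eq_filter, Finset.card_powersetCard,
    Finset.card_univ, Fintype.card_fin]

lemma card_chain (n m : ℕ) :
    Nat.card {p : Fin n → ℤ // Monotone p ∧ ∀ i, 0 ≤ p i ∧ p i ≤ (m : ℤ)} =
      (m + n).choose n := by
  rw [← card_strictMono n (m + n)]
  refine Nat.card_eq_of_bijective (fun p => ⟨fun i => ⟨(p.1 i).toNat + i, ?_⟩, ?_⟩) ⟨?_, ?_⟩
  · have h1 := (p.2.2 i).1
    have h2 := (p.2.2 i).2
    have : (p.1 i).toNat ≤ m := by omega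
    have := i.isLt; omega
  · intro i j hij
    have h1 := p.2.1 hij.le
    have h0 := (p.2.2 i).1
    simp only [Fin.mk_lt_mk]
    have : (p.1 i).toNat ≤ (p.1 j).toNat := by omega
    have : (i : ℕ) < j := hij
    omega
  · rintro ⟨p, hp⟩ ⟨q, hq⟩ h
    simp only [Subtype.mk.injEq] at h ⊢
    funext i
    have := congrFun (congrArg Subtype.val h) i
    simp only [Fin.mk.injEq] at this
    have h1 := (hp.2 i).1
    have h2 := (hq.2 i).1
    omega
  · rintro ⟨f, hf⟩
    refine ⟨⟨fun i => (f i : ℤ) - i, ?_, ?_⟩, ?_⟩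
    · intro i j hij
      have := fin_gap hf ((j : ℕ) - i) i j (by omega)
      simp only
      omega
    · intro i
      constructor
      · have := fin_gap hf (i : ℕ) ⟨0, i.pos⟩ i (by simp)
        simp only
        omega
      · have hlt : (i : ℕ) ≤ n - 1 := by have := i.isLt; omega
        set j : Fin n := ⟨n - 1, by have := i.isLt; omega⟩ with hj
        have hgap := fin_gap hf (n - 1 - i) i j (by simp [hj]; omega)
        have hb := (f j).isLt
        simp only
        omega
    · apply Subtype.ext
      funext i
      ext
      simp only
      have : ((f i : ℤ) - i).toNat = (f i : ℕ) - (i:ℕ) := by omega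
      rw [this]
      have := fin_gap hf (i : ℕ) ⟨0, i.pos⟩ i (by simp)
      omega


def lhFrc (n : ℕ) (s : Fin n → ℕ) (r : Fin n → ℤ) (k : ℕ) : ℚ :=
  if h : k < n then (r ⟨k, h⟩ : ℚ) / ((s ⟨k, h⟩ : ℕ) : ℚ) else 0

def lhDlt (n : ℕ) (s : Fin n → ℕ) (r : Fin n → ℤ) (k : ℕ) : ℕ :=
  ((Finset.range k).filter (fun j => lhFrc n s r (j + 1) < lhFrc n s r j)).card

lemma lhDlt_zero (n s r) : lhDlt n s r 0 = 0 := by simp [lhDlt]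

lemma lhDlt_succ (n s r k) : lhDlt n s r (k + 1) =
    lhDlt n s r k + (if lhFrc n s r (k + 1) < lhFrc n s r k then 1 else 0) := by
  unfold lhDlt
  rw [Finset.range_add_one, Finset.filter_insert]
  split <;> simp [Finset.card_insert_of_notMem, Finset.mem_filter]

lemma lhDlt_le (n s r k) : lhDlt n s r k ≤ k :=
  le_trans (Finset.card_filter_le _ _) (by simp)

lemma lhFrc_eval (n : ℕ) (s : Fin n → ℕ) (r : Fin n → ℤ) (i : Fin n) :
    lhFrc n s r ↑i = (r i : ℚ) / (s i : ℚ) := by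
  rw [lhFrc, dif_pos i.isLt]

lemma snoc_frc_eval (n : ℕ) (s : Fin n → ℕ) (r : Fin n → ℤ) (k : ℕ) (hk : k < n + 1) :
    ((Fin.snoc r (0 : ℤ) : Fin (n+1) → ℤ) ⟨k, hk⟩ : ℚ) /
      (((Fin.snoc s 1 : Fin (n+1) → ℕ) ⟨k, hk⟩ : ℕ) : ℚ) =
      lhFrc n s r k := by
  by_cases h : k < n
  · have h1 : (⟨k, hk⟩ : Fin (n + 1)) = Fin.castSucc ⟨k, h⟩ := rfl
    rw [h1, Fin.snoc_castSucc, Fin.snoc_castSucc, lhFrc, dif_pos h]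
  · have hk' : k = n := by omega
    subst hk'
    have h1 : (⟨k, hk⟩ : Fin (k + 1)) = Fin.last k := rfl
    rw [h1, Fin.snoc_last, Fin.snoc_last, lhFrc, dif_neg h]
    simp

lemma sDes_eq_lhDlt (n : ℕ) (s : Fin n → ℕ) (r : Fin n → ℤ) :
    sDes (Fin.snoc s 1) (Fin.snoc r (0 : ℤ)) = lhDlt n s r n := by
  classical
  unfold sDes
  set r' : Fin (n+1) → ℤ := Fin.snoc r 0 with hr'
  set s' : Fin (n+1) → ℕ := Fin.snoc s 1 with hs'
  have hset : {i : Fin (n + 1) | ∃ h : (i : ℕ) + 1 < n + 1,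
      (r' i : ℚ) / (s' i : ℚ) >
        (r' ⟨(i : ℕ) + 1, h⟩ : ℚ) / (s' ⟨(i : ℕ) + 1, h⟩ : ℚ)} =
      ↑((Finset.univ : Finset (Fin (n + 1))).filter
        (fun i : Fin (n+1) => (i : ℕ) < n ∧ lhFrc n s r ((i : ℕ) + 1) < lhFrc n s r (i : ℕ))) := by
    ext i
    simp only [Set.mem_setOf_eq, Finset.coe_filter, Finset.mem_univ, true_and]
    constructor
    · rintro ⟨h, hlt⟩
      refine ⟨by omega, ?_⟩
      rw [← snoc_frc_eval n s r ((i:ℕ)+1) h, ← snoc_frc_eval n s r (i:ℕ) (by omega)]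
      simpa [Fin.eta] using hlt
    · rintro ⟨h, hlt⟩
      refine ⟨by omega, ?_⟩
      rw [← snoc_frc_eval n s r ((i:ℕ)+1) (by omega), ← snoc_frc_eval n s r (i:ℕ) (by omega)] at hlt
      simpa [Fin.eta] using hlt
  rw [hset, Set.ncard_coe_finset]
  unfold lhDlt
  refine Finset.card_bij (fun i _ => (i : ℕ)) ?_ ?_ ?_
  · intro a ha
    simp only [Finset.mem_filter, Finset.mem_univ, true_and] at ha
    simp [Finset.mem_filter, Finset.mem_range, ha.1, ha.2]
  · intro a _ b _ h
    exact Fin.ext h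
  · intro b hb
    simp only [Finset.mem_filter, Finset.mem_range] at hb
    exact ⟨⟨b, by omega⟩, by simp [Finset.mem_filter, hb.1, hb.2], rfl⟩
lemma int_frac_le {a b : ℤ} {x y : ℚ} (hx : 0 ≤ x) (hx1 : x < 1) (hy : 0 ≤ y) (hy1 : y < 1) :
    (a : ℚ) + x ≤ (b : ℚ) + y ↔ a + (if y < x then 1 else 0) ≤ b := by
  split_ifs with h
  · constructor
    · intro hle
      have : (a : ℚ) < b := by linarith
      have : a < b := by exact_mod_cast this
      omega
    · intro hle
      have : (a : ℚ) + 1 ≤ b := by exact_mod_cast hle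
      linarith
  · push_neg at h
    constructor
    · intro hle
      have : (a : ℚ) < b + 1 := by linarith
      have : a < b + 1 := by exact_mod_cast this
      omega
    · intro hle
      have : (a : ℚ) ≤ b := by exact_mod_cast by omega
      linarith

lemma lhFrc_bounds (n : ℕ) (s : Fin n → ℕ) (hs : ∀ i, 0 < s i) (r : Fin n → ℤ)
    (hr : ∀ i, 0 ≤ r i ∧ r i < (s i : ℤ)) (k : ℕ) :
    0 ≤ lhFrc n s r k ∧ lhFrc n s r k < 1 := by
  unfold lhFrc
  split_ifs with h
  · have hsp : (0 : ℚ) < ((s ⟨k, h⟩ : ℕ) : ℚ) := by exact_mod_cast hs ⟨k, h⟩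
    constructor
    · apply div_nonneg _ hsp.le
      exact_mod_cast (hr ⟨k, h⟩).1
    · rw [div_lt_one hsp]
      exact_mod_cast (hr ⟨k, h⟩).2
  · norm_num

lemma rat_div_decomp {n : ℕ} (s : Fin n → ℕ) (hs : ∀ i, 0 < s i) (lam : Fin n → ℤ) (i : Fin n) :
    (lam i : ℚ) / (s i : ℚ) =
      ((lam i / (s i : ℤ) : ℤ) : ℚ) + ((lam i % (s i : ℤ) : ℤ) : ℚ) / (s i : ℚ) := by
  have hsp' : ((s i : ℕ) : ℚ) ≠ 0 := by
    have := hs i; positivity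
  have hd := Int.mul_ediv_add_emod (lam i) (s i : ℤ)
  set Q := lam i / (s i : ℤ) with hQ
  set R := lam i % (s i : ℤ) with hR
  rw [← hd]
  push_cast
  field_simp

lemma dilate_iff (n : ℕ) (s : Fin n → ℕ) (hs : ∀ i, 0 < s i) (t : ℕ)
    (lam r q : Fin n → ℤ)
    (hr : ∀ i, 0 ≤ r i ∧ r i < (s i : ℤ))
    (hlam : ∀ i, (lam i : ℚ) / (s i : ℚ) = (q i : ℚ) + lhFrc n s r ↑i) :
    inDilate s t lam ↔
      ((∀ i : Fin n, (i : ℕ) = 0 → 0 ≤ q i) ∧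
       (∀ i : Fin n, ∀ h : (i : ℕ) + 1 < n,
         q i + (if lhFrc n s r ((i : ℕ) + 1) < lhFrc n s r (i : ℕ) then 1 else 0) ≤
           q ⟨(i : ℕ) + 1, h⟩) ∧
       (∀ i : Fin n, (i : ℕ) = n - 1 →
         q i + (if lhFrc n s r ((i : ℕ) + 1) < lhFrc n s r (i : ℕ) then 1 else 0) ≤ (t : ℤ))) := by
  unfold inDilate
  refine and_congr (forall_congr' fun i => imp_congr_right fun hi => ?_)
    (and_congr (forall_congr' fun i => forall_congr' fun h => ?_)
      (forall_congr' fun i => imp_congr_right fun hi => ?_))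
  · have hb := lhFrc_bounds n s hs r hr ↑i
    rw [hlam i, show (0 : ℚ) = ((0 : ℤ) : ℚ) + 0 by norm_num,
      int_frac_le le_rfl zero_lt_one hb.1 hb.2, if_neg (not_lt.2 hb.1)]
    constructor <;> intro <;> omega
  · have hb1 := lhFrc_bounds n s hs r hr ↑i
    have hb2 := lhFrc_bounds n s hs r hr ((i : ℕ) + 1)
    rw [hlam i, hlam ⟨(i : ℕ) + 1, h⟩, int_frac_le hb1.1 hb1.2 hb2.1 hb2.2]
  · have hb := lhFrc_bounds n s hs r hr ↑i
    have h0 : lhFrc n s r ((i : ℕ) + 1) = 0 := by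
      have := i.isLt
      rw [lhFrc, dif_neg (by omega)]
    rw [hlam i, h0, show ((t : ℕ) : ℚ) = ((t : ℤ) : ℚ) + 0 by push_cast; ring,
      int_frac_le hb.1 hb.2 le_rfl zero_lt_one]

lemma chain_iff (n : ℕ) (s : Fin n → ℕ) (r : Fin n → ℤ) (t : ℕ) (q p : Fin n → ℤ)
    (hp : ∀ i : Fin n, q i = p i + (lhDlt n s r ↑i : ℤ)) :
    ((∀ i : Fin n, (i : ℕ) = 0 → 0 ≤ q i) ∧
     (∀ i : Fin n, ∀ h : (i : ℕ) + 1 < n,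
       q i + (if lhFrc n s r ((i : ℕ) + 1) < lhFrc n s r (i : ℕ) then 1 else 0) ≤
         q ⟨(i : ℕ) + 1, h⟩) ∧
     (∀ i : Fin n, (i : ℕ) = n - 1 →
       q i + (if lhFrc n s r ((i : ℕ) + 1) < lhFrc n s r (i : ℕ) then 1 else 0) ≤ (t : ℤ))) ↔
      (Monotone p ∧ ∀ i, 0 ≤ p i ∧ p i ≤ (t : ℤ) - (lhDlt n s r n : ℤ)) := by
  constructor
  · rintro ⟨c1, c2, c3⟩
    set PP : ℕ → ℤ := fun k => if h : k < n then p ⟨k, h⟩ else (t : ℤ) - (lhDlt n s r n : ℤ)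
      with hPP
    have step : ∀ k, k < n → PP k ≤ PP (k + 1) := by
      intro k hk
      by_cases h2 : k + 1 < n
      · simp only [hPP, dif_pos hk, dif_pos h2]
        have hc := c2 ⟨k, hk⟩ h2
        rw [hp ⟨k, hk⟩, hp ⟨k + 1, h2⟩] at hc
        simp only [Fin.val_mk] at hc
        rw [lhDlt_succ] at hc
        split_ifs at hc <;> push_cast at hc <;> omega
      · have hk1 : k + 1 = n := by omega
        simp only [hPP, dif_pos hk, dif_neg (by omega : ¬ k + 1 < n)]
        have hc := c3 ⟨k, hk⟩ (by exact (by omega : k = n - 1))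
        rw [hp ⟨k, hk⟩] at hc
        simp only [Fin.val_mk] at hc
        have hdn := lhDlt_succ n s r k
        conv at hdn => lhs; rw [hk1]
        rw [hdn]
        split_ifs at hc ⊢ <;> push_cast at hc ⊢ <;> omega
    have up : ∀ d k, k + d ≤ n → PP k ≤ PP (k + d) := by
      intro d
      induction d with
      | zero => intro k _; simp
      | succ d ih =>
        intro k hk
        calc PP k ≤ PP (k + d) := ih k (by omega)
          _ ≤ PP (k + d + 1) := step _ (by omega)
    have hPPi : ∀ i : Fin n, PP ↑i = p i := by
      intro i
      simp only [hPP, dif_pos i.isLt, Fin.eta]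
    refine ⟨?_, ?_⟩
    · intro i j hij
      have := up (↑j - ↑i) ↑i (by have := j.isLt; omega)
      rw [show (↑i + (↑j - ↑i) : ℕ) = ↑j by have : (i:ℕ) ≤ j := hij; omega] at this
      rwa [hPPi i, hPPi j] at this
    · intro i
      constructor
      · have h0 := c1 ⟨0, i.pos⟩ rfl
        rw [hp ⟨0, i.pos⟩] at h0
        simp only [Fin.val_mk, lhDlt_zero, Nat.cast_zero, add_zero] at h0
        have := up ↑i 0 (by have := i.isLt; omega)
        rw [zero_add, hPPi i] at this
        have hP0 : PP 0 = p ⟨0, i.pos⟩ := by simp only [hPP, dif_pos i.pos]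
        omega
      · have := up (n - ↑i) ↑i (by omega)
        rw [show (↑i + (n - ↑i) : ℕ) = n by have := i.isLt; omega] at this
        rw [hPPi i] at this
        simpa only [hPP, dif_neg (lt_irrefl n)] using this
  · rintro ⟨hm, hb⟩
    refine ⟨?_, ?_, ?_⟩
    · intro i hi
      rw [hp i, hi, lhDlt_zero]
      have := (hb i).1
      simp only [Nat.cast_zero, add_zero]
      omega
    · intro i h
      rw [hp i, hp ⟨↑i + 1, h⟩]
      simp only [Fin.val_mk]
      rw [lhDlt_succ]
      have hmono : p i ≤ p ⟨↑i + 1, h⟩ := hm (by simp [Fin.le_def])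
      split_ifs <;> push_cast <;> omega
    · intro i hi
      have hn1 : (i : ℕ) + 1 = n := by have := i.isLt; omega
      rw [hp i]
      have h2 := (hb i).2
      have hdn := lhDlt_succ n s r ↑i
      conv at hdn => lhs; rw [hn1]
      rw [hdn] at h2
      split_ifs at h2 ⊢ <;> push_cast at h2 ⊢ <;> omega
noncomputable def lhPsiFin (n : ℕ) (s : Fin n → ℕ) : Finset (Fin n → ℤ) :=
  Fintype.piFinset fun i => Finset.Icc 0 ((s i : ℤ) - 1)

lemma mem_lhPsiFin {n : ℕ} {s : Fin n → ℕ} (r : Fin n → ℤ) :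
    r ∈ lhPsiFin n s ↔ ∀ i, 0 ≤ r i ∧ r i < (s i : ℤ) := by
  simp only [lhPsiFin, Fintype.mem_piFinset, Finset.mem_Icc]
  exact forall_congr' fun i => by omega

def lhR (n : ℕ) (s : Fin n → ℕ) (lam : Fin n → ℤ) : Fin n → ℤ := fun i => lam i % (s i : ℤ)

def lhP (n : ℕ) (s : Fin n → ℕ) (lam : Fin n → ℤ) : Fin n → ℤ :=
  fun i => lam i / (s i : ℤ) - (lhDlt n s (lhR n s lam) ↑i : ℤ)

def lhSig (n : ℕ) (s : Fin n → ℕ) (t : ℕ) : Type :=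
  Σ r : {r : Fin n → ℤ // r ∈ lhPsiFin n s},
    {p : Fin n → ℤ // Monotone p ∧ ∀ i, 0 ≤ p i ∧ p i ≤ (t : ℤ) - (lhDlt n s r.1 n : ℤ)}

lemma lhSig_ext {n : ℕ} {s : Fin n → ℕ} {t : ℕ} {x y : lhSig n s t}
    (h1 : x.1.1 = y.1.1) (h2 : x.2.1 = y.2.1) : x = y := by
  obtain ⟨⟨r1, hr1⟩, ⟨p1, hp1⟩⟩ := x
  obtain ⟨⟨r2, hr2⟩, ⟨p2, hp2⟩⟩ := y
  simp only at h1 h2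
  subst h1; subst h2
  rfl

lemma lhR_bounds {n : ℕ} {s : Fin n → ℕ} (hs : ∀ i, 0 < s i) (lam : Fin n → ℤ) :
    ∀ i, 0 ≤ lhR n s lam i ∧ lhR n s lam i < (s i : ℤ) := by
  intro i
  have h1 : (0 : ℤ) < (s i : ℤ) := by exact_mod_cast hs i
  exact ⟨Int.emod_nonneg _ (by omega), Int.emod_lt_of_pos _ h1⟩

lemma dilate_iff' (n : ℕ) (s : Fin n → ℕ) (hs : ∀ i, 0 < s i) (t : ℕ) (lam : Fin n → ℤ) :
    inDilate s t lam ↔ (Monotone (lhP n s lam) ∧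
      ∀ i, 0 ≤ lhP n s lam i ∧ lhP n s lam i ≤ (t : ℤ) - (lhDlt n s (lhR n s lam) n : ℤ)) := by
  refine (dilate_iff n s hs t lam (lhR n s lam) (fun i => lam i / (s i : ℤ))
    (lhR_bounds hs lam) ?_).trans
    (chain_iff n s (lhR n s lam) t _ (lhP n s lam) ?_)
  · intro i
    rw [rat_div_decomp s hs lam i, lhFrc_eval]
    rfl
  · intro i
    simp only [lhP]
    ring

lemma main_card (n : ℕ) (s : Fin n → ℕ) (hs : ∀ i, 0 < s i) (t : ℕ) :
    Nat.card {lam : Fin n → ℤ // inDilate s t lam} = Nat.card (lhSig n s t) := by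
  apply Nat.card_eq_of_bijective (fun lam =>
    (⟨⟨lhR n s lam.1, (mem_lhPsiFin _).mpr (lhR_bounds hs lam.1)⟩,
      ⟨lhP n s lam.1, (dilate_iff' n s hs t lam.1).mp lam.2⟩⟩ : lhSig n s t))
  constructor
  · rintro ⟨x, hx⟩ ⟨y, hy⟩ h
    have h1 : lhR n s x = lhR n s y := congrArg (fun z : lhSig n s t => z.1.1) h
    have h2 : lhP n s x = lhP n s y := congrArg (fun z : lhSig n s t => z.2.1) h
    apply Subtype.ext
    funext i
    have hdx := Int.mul_ediv_add_emod (x i) (s i : ℤ)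
    have hdy := Int.mul_ediv_add_emod (y i) (s i : ℤ)
    have e1 : x i % (s i : ℤ) = y i % (s i : ℤ) := congrFun h1 i
    have e2 : lhP n s x i = lhP n s y i := congrFun h2 i
    simp only [lhP, h1] at e2
    have e3 : x i / (s i : ℤ) = y i / (s i : ℤ) := by omega
    calc x i = (s i : ℤ) * (x i / (s i : ℤ)) + x i % (s i : ℤ) := hdx.symm
      _ = (s i : ℤ) * (y i / (s i : ℤ)) + y i % (s i : ℤ) := by rw [e1, e3]
      _ = y i := hdy
  · rintro ⟨⟨r, hrmem⟩, ⟨p, hp⟩⟩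
    have hr : ∀ i, 0 ≤ r i ∧ r i < (s i : ℤ) := (mem_lhPsiFin r).mp hrmem
    set lam : Fin n → ℤ :=
      fun i => (s i : ℤ) * (p i + (lhDlt n s r ↑i : ℤ)) + r i with hlam
    have ha : lhR n s lam = r := by
      funext i
      simp only [lhR, hlam]
      rw [mul_comm, add_comm, Int.add_mul_emod_self_right]
      exact Int.emod_eq_of_lt (hr i).1 (hr i).2
    have hb : ∀ i, lam i / (s i : ℤ) = p i + (lhDlt n s r ↑i : ℤ) := by
      intro i
      have hsi : (s i : ℤ) ≠ 0 := by have := hs i; omega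
      simp only [hlam]
      rw [add_comm, Int.add_mul_ediv_left _ _ hsi,
        Int.ediv_eq_zero_of_lt (hr i).1 (hr i).2, zero_add]
    have hP : lhP n s lam = p := by
      funext i
      simp only [lhP, ha, hb i]
      ring
    have hin : inDilate s t lam := by
      rw [dilate_iff' n s hs t lam, hP, ha]
      exact hp
    exact ⟨⟨lam, hin⟩, lhSig_ext ha hP⟩
lemma card_chain_int (n t D : ℕ) (hD : D ≤ n) :
    Nat.card {p : Fin n → ℤ // Monotone p ∧ ∀ i, 0 ≤ p i ∧ p i ≤ (t : ℤ) - (D : ℤ)} =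
      (t + n - D).choose n := by
  by_cases h : D ≤ t
  · have he : (t : ℤ) - (D : ℤ) = ((t - D : ℕ) : ℤ) := by push_cast; omega
    rw [he, card_chain n (t - D)]
    congr 1
    omega
  · have hn : 0 < n := by omega
    have hneg : (t : ℤ) - (D : ℤ) < 0 := by push_cast; omega
    have : IsEmpty {p : Fin n → ℤ // Monotone p ∧ ∀ i, 0 ≤ p i ∧ p i ≤ (t : ℤ) - (D : ℤ)} := by
      refine ⟨fun ⟨p, hp⟩ => ?_⟩
      have := hp.2 ⟨0, hn⟩
      omega
    rw [Nat.card_of_isEmpty]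
    symm
    exact Nat.choose_eq_zero_of_lt (by omega)

lemma chain_finite (n : ℕ) (M : ℤ) :
    Finite {p : Fin n → ℤ // Monotone p ∧ ∀ i, 0 ≤ p i ∧ p i ≤ M} := by
  haveI : Finite (Set.Icc (0 : ℤ) M) := (Set.finite_Icc 0 M).to_subtype
  apply Finite.of_injective
    (fun p : {p : Fin n → ℤ // Monotone p ∧ ∀ i, 0 ≤ p i ∧ p i ≤ M} =>
      (fun i => (⟨p.1 i, Set.mem_Icc.mpr (p.2.2 i)⟩ : Set.Icc (0 : ℤ) M)))
  intro a b h
  apply Subtype.ext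
  funext i
  exact congrArg Subtype.val (congrFun h i)

theorem stmt_9' (n : ℕ) (s : Fin n → ℕ) (hs : ∀ i, 0 < s i) (t : ℕ) :
    Set.ncard {lam : Fin n → ℤ | inDilate s t lam} =
      ∑ i ∈ Finset.range (n + 1),
        ((lhPsiFin n s).filter (fun r => lhDlt n s r n = i)).card *
          Nat.choose (t + n - i) n := by
  have h1 : Set.ncard {lam : Fin n → ℤ | inDilate s t lam} =
      Nat.card {lam : Fin n → ℤ // inDilate s t lam} := rfl
  rw [h1, main_card n s hs t]
  haveI : ∀ r : {r : Fin n → ℤ // r ∈ lhPsiFin n s},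
      Fintype {p : Fin n → ℤ // Monotone p ∧ ∀ i, 0 ≤ p i ∧
        p i ≤ (t : ℤ) - (lhDlt n s r.1 n : ℤ)} :=
    fun r => @Fintype.ofFinite _ (chain_finite n _)
  have h2 : Nat.card (lhSig n s t) =
      ∑ r : {r : Fin n → ℤ // r ∈ lhPsiFin n s},
        Nat.card {p : Fin n → ℤ // Monotone p ∧ ∀ i, 0 ≤ p i ∧
          p i ≤ (t : ℤ) - (lhDlt n s r.1 n : ℤ)} := by
    unfold lhSig
    rw [Nat.card_eq_fintype_card, Fintype.card_sigma]
    exact Finset.sum_congr rfl fun r _ => (Nat.card_eq_fintype_card).symm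
  rw [h2]
  have h3 : ∀ r : {r : Fin n → ℤ // r ∈ lhPsiFin n s},
      Nat.card {p : Fin n → ℤ // Monotone p ∧ ∀ i, 0 ≤ p i ∧
        p i ≤ (t : ℤ) - (lhDlt n s r.1 n : ℤ)} =
      (t + n - lhDlt n s r.1 n).choose n :=
    fun r => card_chain_int n t _ (lhDlt_le n s r.1 n)
  rw [Finset.sum_congr rfl fun r _ => h3 r]
  rw [Finset.sum_coe_sort (lhPsiFin n s) (fun r => (t + n - lhDlt n s r n).choose n)]
  have hmaps : ∀ x ∈ lhPsiFin n s, lhDlt n s x n ∈ Finset.range (n + 1) :=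
    by intro x _; exact Finset.mem_range.mpr (Nat.lt_succ_of_le (lhDlt_le n s x n))
  rw [← Finset.sum_fiberwise_of_maps_to hmaps (fun r => (t + n - lhDlt n s r n).choose n)]
  refine Finset.sum_congr rfl fun i _ => ?_
  rw [Finset.sum_congr rfl (fun r hr => by
    rw [(Finset.mem_filter.mp hr).2]), Finset.sum_const, smul_eq_mul]

/-- Ehrhart of `P_s` via `s*`-descents: the number of lattice points in
the `t`-th dilate of `P_s` equals `∑_{i=0}^n c_i · C(t+n-i,n)` with
`c_i = #{r ∈ Ψ_n : des_{s*}(r,0) = i}`. -/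
theorem stmt_9 (n : ℕ) (s : Fin n → ℕ) (hs : ∀ i, 0 < s i) (t : ℕ) :
    Set.ncard {lam : Fin n → ℤ | inDilate s t lam} =
      ∑ i ∈ Finset.range (n + 1),
        Set.ncard {r ∈ lhPsi s | sDes (Fin.snoc s 1) (Fin.snoc r (0 : ℤ)) = i} *
          Nat.choose (t + n - i) n := by

  have hpsi : ∀ i, Set.ncard {r ∈ lhPsi s | sDes (Fin.snoc s 1) (Fin.snoc r (0 : ℤ)) = i} =
      ((lhPsiFin n s).filter (fun r => lhDlt n s r n = i)).card := by
    intro i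
    have hset : {r ∈ lhPsi s | sDes (Fin.snoc s 1) (Fin.snoc r (0 : ℤ)) = i} =
        ↑((lhPsiFin n s).filter (fun r => lhDlt n s r n = i)) := by
      ext r
      simp only [Set.mem_sep_iff, Finset.coe_filter, Set.mem_setOf_eq,
        mem_lhPsiFin, sDes_eq_lhDlt, lhPsi, Set.mem_setOf_eq]
    rw [hset, Set.ncard_coe_finset]
  rw [stmt_9' n s hs t]
  exact Finset.sum_congr rfl fun i _ => by rw [hpsi i]
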